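/- Let B be an n×m real matrix and D an m×m diagonal matrix with positive diagonal entries, set Q = B·D⁻¹·Bᵀ, equip ℝᵐ with the inner product ⟨x,y⟩_D = xᵀ·D·y, and let L be any generalized inverse of Q. Let P : ℝᵐ → ℝᵐ be the orthogonal projection of (ℝᵐ, ⟨·,·⟩_D) onto the orthogonal complement of ker(B). Fix indices x, y ∈ {1,…,n} and let γ, γ' ∈ ℝᵐ be any two vectors with B·γ = B·γ' = δ_x − δ_y. Then ⟨γ', P(γ)⟩_D = ⟨P(γ), P(γ)⟩_D = (δ_x − δ_y)ᵀ·L·(δ_x − δ_y); that is, the effective resistance r(x,y) equals the squared D-norm of the projection of any 1-chain with boundary δ_x − δ_y (Thomson's principle). (Paper: Corollary 6.6 and Remark 6.7.) -/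

import Mathlib

open Matrix

lemma mem_range_transpose {n m : ℕ} (B : Matrix (Fin n) (Fin m) ℝ) (v : Fin m → ℝ)
    (h : ∀ z, B.mulVec z = 0 → v ⬝ᵥ z = 0) : ∃ w, Bᵀ.mulVec w = v := by
  let W : Submodule ℝ (EuclideanSpace ℝ (Fin m)) :=
    LinearMap.range ((WithLp.linearEquiv 2 ℝ (Fin m → ℝ)).symm.toLinearMap ∘ₗ Bᵀ.mulVecLin)
  have hv : WithLp.toLp 2 v ∈ W := by
    rw [← Submodule.orthogonal_orthogonal W]
    intro u hu
    have hker : B.mulVec u.ofLp = 0 := by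
      have := hu (WithLp.toLp 2 (Bᵀ.mulVec (B.mulVec u.ofLp))) ⟨B.mulVec u.ofLp, rfl⟩
      have h2 : (B.mulVec u.ofLp) ⬝ᵥ (B.mulVec u.ofLp) = 0 := by
        have : (Bᵀ.mulVec (B.mulVec u.ofLp)) ⬝ᵥ u.ofLp = 0 := by
          simpa [real_inner_comm, PiLp.inner_apply, dotProduct, mul_comm] using this
        rw [← this, dotProduct_mulVec, mulVec_transpose]
      exact dotProduct_self_eq_zero.mp h2
    have := h u.ofLp hker
    simpa [PiLp.inner_apply, dotProduct, mul_comm] using this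
  obtain ⟨w, hw⟩ := hv
  exact ⟨w, congrArg WithLp.ofLp hw⟩


/-- **Corollary 6.6 and Remark 6.7 (Thomson's principle).** Let `Q = B D⁻¹ Bᵀ` with `D` a
positive diagonal matrix, `L` any generalized inverse of `Q`, and `P` the orthogonal
projection of `(ℝᵐ, ⟨x,y⟩_D)` onto the orthogonal complement of `ker B`. If `γ, γ'` are any
two vectors with `B γ = B γ' = δ_x - δ_y`, then
`⟨γ', P γ⟩_D = ⟨P γ, P γ⟩_D = (δ_x - δ_y)ᵀ L (δ_x - δ_y)`: the effective resistance
`r(x,y)` is the squared `D`-norm of the projection of any 1-chain with boundary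
`δ_x - δ_y`. -/
theorem thomson_principle
    {n m : ℕ} (B : Matrix (Fin n) (Fin m) ℝ) (d : Fin m → ℝ)
    (hd : ∀ i, 0 < d i)
    (L : Matrix (Fin n) (Fin n) ℝ)
    (hL : (B * (Matrix.diagonal d)⁻¹ * Bᵀ) * L * (B * (Matrix.diagonal d)⁻¹ * Bᵀ)
        = B * (Matrix.diagonal d)⁻¹ * Bᵀ)
    (P : (Fin m → ℝ) → (Fin m → ℝ))
    (hP1 : ∀ γ : Fin m → ℝ, B.mulVec (P γ) = B.mulVec γ)
    (hP2 : ∀ γ y : Fin m → ℝ, B.mulVec y = 0 →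
      P γ ⬝ᵥ (Matrix.diagonal d).mulVec y = 0)
    (x y : Fin n) (γ γ' : Fin m → ℝ)
    (hγ : B.mulVec γ = Pi.single x 1 - Pi.single y 1)
    (hγ' : B.mulVec γ' = Pi.single x 1 - Pi.single y 1) :
    γ' ⬝ᵥ (Matrix.diagonal d).mulVec (P γ) = P γ ⬝ᵥ (Matrix.diagonal d).mulVec (P γ) ∧
    P γ ⬝ᵥ (Matrix.diagonal d).mulVec (P γ) =
      (Pi.single x 1 - Pi.single y 1) ⬝ᵥ L.mulVec (Pi.single x 1 - Pi.single y 1) := by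
  set D := Matrix.diagonal d with hD
  set δ : Fin n → ℝ := Pi.single x 1 - Pi.single y 1 with hδ
  -- symmetry of the D-bilinear form
  have hsym : ∀ u w : Fin m → ℝ, u ⬝ᵥ D.mulVec w = w ⬝ᵥ D.mulVec u := by
    intro u w
    simp only [hD, dotProduct, mulVec_diagonal]
    exact Finset.sum_congr rfl (fun i _ => by ring)
  -- inverse of the diagonal matrix
  have hdne : ∀ i, d i ≠ 0 := fun i => (hd i).ne'
  have hDinv : D⁻¹ = Matrix.diagonal (fun i => (d i)⁻¹) := by
    apply inv_eq_right_inv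
    rw [hD, diagonal_mul_diagonal]
    simp [hdne]
  have hDinvD : ∀ v : Fin m → ℝ, D⁻¹.mulVec (D.mulVec v) = v := by
    intro v
    rw [hDinv, hD, mulVec_mulVec, diagonal_mul_diagonal]
    funext i
    simp [mulVec_diagonal, hdne i]
  -- Part 1
  have hker : B.mulVec (γ' - P γ) = 0 := by
    rw [mulVec_sub, hγ', hP1, hγ, sub_self]
  have part1 : γ' ⬝ᵥ D.mulVec (P γ) = P γ ⬝ᵥ D.mulVec (P γ) := by
    have h0 := hP2 γ (γ' - P γ) hker
    have : P γ ⬝ᵥ D.mulVec γ' - P γ ⬝ᵥ D.mulVec (P γ) = 0 := by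
      rw [← dotProduct_sub, ← mulVec_sub]; exact h0
    have h1 : P γ ⬝ᵥ D.mulVec γ' = P γ ⬝ᵥ D.mulVec (P γ) := by linarith
    rw [hsym γ' (P γ), h1]
  -- Part 2: get w with Bᵀ w = D (P γ)
  obtain ⟨w, hw⟩ := mem_range_transpose B (D.mulVec (P γ)) (fun z hz => by
    rw [dotProduct_comm, hsym z (P γ)]; exact hP2 γ z hz)
  have hBPγ : B.mulVec (P γ) = δ := by rw [hP1, hγ]
  have hQw : (B * D⁻¹ * Bᵀ).mulVec w = δ := by
    rw [← mulVec_mulVec, ← mulVec_mulVec, hw, hDinvD, hBPγ]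
  have hQsym : (B * D⁻¹ * Bᵀ)ᵀ = B * D⁻¹ * Bᵀ := by
    rw [hDinv]
    simp [Matrix.transpose_mul, Matrix.mul_assoc]
  have hQvec : ∀ v, (B * D⁻¹ * Bᵀ).mulVec v = Matrix.vecMul v (B * D⁻¹ * Bᵀ) := by
    intro v
    conv_lhs => rw [← hQsym]
    rw [mulVec_transpose]
  have hval : P γ ⬝ᵥ D.mulVec (P γ) = δ ⬝ᵥ w := by
    rw [← hw, dotProduct_mulVec, vecMul_transpose, hBPγ]
  have hQLQ : (B * D⁻¹ * Bᵀ) * (L * (B * D⁻¹ * Bᵀ)) = B * D⁻¹ * Bᵀ := by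
    rw [← Matrix.mul_assoc (B * D⁻¹ * Bᵀ) L]; exact hL
  have key : δ ⬝ᵥ L.mulVec δ = δ ⬝ᵥ w := by
    conv_lhs => rw [← hQw]
    conv_rhs => rw [← hQw]
    rw [mulVec_mulVec, hQvec w, dotProduct_mulVec, vecMul_vecMul, hQLQ]
  refine ⟨part1, ?_⟩
  rw [hval]; exact key.symm
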